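/- Let α < α₁ ≤ ⋯ ≤ α_r be positive integers such that whenever ∑_i ε_i α_i = 0 with each ε_i ∈ {−1,0,1}, all ε_i = 0. Then ∑_{n ∈ 𝒫_β^σ} n^{-1/α} = ∏_{i=1}^r P(α_i/α), where β = (α₁,…,α_r). -/

import Mathlib

open Filter Asymptotics Real

/-- The set of integers expressible as `p₁^{β 0} ⋯ p_r^{β (r-1)}` for primes `pᵢ`
(repetitions allowed). -/
def Psigma {r : ℕ} (β : Fin r → ℕ) : Set ℕ :=
  {n | ∃ p : Fin r → ℕ, (∀ i, (p i).Prime) ∧ n = ∏ i, p i ^ β i}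

/-- The set of integers expressible as `p₁^{β 0} ⋯ p_r^{β (r-1)}` for pairwise distinct
primes `pᵢ`. -/
def Ppi {r : ℕ} (β : Fin r → ℕ) : Set ℕ :=
  {n | ∃ p : Fin r → ℕ, (∀ i, (p i).Prime) ∧ Function.Injective p ∧ n = ∏ i, p i ^ β i}

/-- The number of `n ∈ S` with `n ≤ x`. -/
noncomputable def countIn (S : Set ℕ) (x : ℝ) : ℕ :=
  Nat.card {n : ℕ | (n : ℝ) ≤ x ∧ n ∈ S}

lemma pi_tsum_prod {κ : Type*} : ∀ (n : ℕ) (f : Fin n → κ → ℝ),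
    (∀ i, Summable fun k ↦ ‖f i k‖) →
    (Summable fun g : Fin n → κ ↦ ‖∏ i, f i (g i)‖) ∧
    (∑' g : Fin n → κ, ∏ i, f i (g i)) = ∏ i, ∑' k, f i k := by
  intro n
  induction n with
  | zero =>
    intro f _
    constructor
    · exact .of_finite
    · rw [tsum_eq_single (default : Fin 0 → κ) (fun b hb ↦ absurd (Subsingleton.elim b default) hb)]
      simp
  | succ n ih =>
    intro f hf
    obtain ⟨hs, he⟩ := ih (fun i ↦ f i.succ) (fun i ↦ hf i.succ)
    have key : ∀ g : Fin (n+1) → κ, ∏ i, f i (g i)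
        = f 0 (g 0) * ∏ i : Fin n, f i.succ (g i.succ) := fun g ↦ Fin.prod_univ_succ _
    have hsum2 : Summable fun z : κ × (Fin n → κ) ↦
        ‖f 0 z.1 * ∏ i : Fin n, f i.succ (z.2 i)‖ := by
      simp only [norm_mul]
      apply Summable.mul_of_nonneg (hf 0) hs <;> exact fun n ↦ norm_nonneg _
    have hcomp : ∀ z : κ × (Fin n → κ),
        (∏ i, f i (Fin.consEquiv (fun _ : Fin (n+1) ↦ κ) z i)) = f 0 z.1 * ∏ i : Fin n, f i.succ (z.2 i) := by
      intro z
      rw [key]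
      simp [Fin.consEquiv]
    constructor
    · rw [← (Fin.consEquiv (fun _ : Fin (n+1) ↦ κ)).summable_iff]
      convert hsum2 using 2 with z
      rw [Function.comp_apply, hcomp]
    · calc ∑' g : Fin (n+1) → κ, ∏ i, f i (g i)
          = ∑' z : κ × (Fin n → κ), ∏ i, f i (Fin.consEquiv (fun _ : Fin (n+1) ↦ κ) z i) := ((Fin.consEquiv (fun _ : Fin (n+1) ↦ κ)).tsum_eq _).symm
        _ = ∑' z : κ × (Fin n → κ), f 0 z.1 * ∏ i : Fin n, f i.succ (z.2 i) := by
            exact tsum_congr hcomp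
        _ = (∑' k, f 0 k) * ∑' g : Fin n → κ, ∏ i : Fin n, f i.succ (g i) :=
            (tsum_mul_tsum_of_summable_norm (hf 0) hs).symm
        _ = ∏ i : Fin (n+1), ∑' k, f i k := by rw [he, Fin.prod_univ_succ]

lemma fact_eval {r : ℕ} (β : Fin r → ℕ) (p : Fin r → {p : ℕ // p.Prime}) (ℓ : ℕ) :
    (∏ i, (p i : ℕ) ^ β i).factorization ℓ = ∑ i, β i * (if (p i : ℕ) = ℓ then 1 else 0) := by
  rw [Nat.factorization_prod (fun i _ ↦ pow_ne_zero _ (p i).2.ne_zero)]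
  rw [Finsupp.finset_sum_apply]
  refine Finset.sum_congr rfl fun i _ ↦ ?_
  rw [Nat.factorization_pow, Finsupp.smul_apply, (p i).2.factorization, Finsupp.single_apply]
  simp [mul_comm]

/-- if no nontrivial `{-1,0,1}`-combination of the `αᵢ` vanishes, then
`∑_{n ∈ 𝒫_β^σ} n^{-1/α} = ∏ᵢ P(αᵢ/α)`. -/
theorem constant_factor (r α : ℕ) (hα : 0 < α) (β : Fin r → ℕ)
    (hmono : Monotone β) (h : ∀ i, α < β i)
    (hind : ∀ ε : Fin r → ℤ, (∀ i, ε i = -1 ∨ ε i = 0 ∨ ε i = 1) →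
      (∑ i, ε i * (β i : ℤ)) = 0 → ∀ i, ε i = 0) :
    (∑' n : Psigma β, ((n : ℕ) : ℝ) ^ (-(1 : ℝ) / (α : ℝ))) =
      ∏ i : Fin r,
        ∑' p : {p : ℕ // p.Prime}, ((p : ℕ) : ℝ) ^ (-((β i : ℝ) / (α : ℝ))) := by
  -- the parametrizing map
  have hmem : ∀ p : Fin r → {p : ℕ // p.Prime}, (∏ i, (p i : ℕ) ^ β i) ∈ Psigma β :=
    fun p ↦ ⟨fun i ↦ (p i : ℕ), fun i ↦ (p i).2, rfl⟩
  set Φ : (Fin r → {p : ℕ // p.Prime}) → ↥(Psigma β) :=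
    fun p ↦ ⟨∏ i, (p i : ℕ) ^ β i, hmem p⟩ with hΦ
  have hinj : Function.Injective Φ := by
    intro p q hpq
    have hpq' : (∏ i, (p i : ℕ) ^ β i) = ∏ i, (q i : ℕ) ^ β i := congrArg Subtype.val hpq
    funext i₀
    set ℓ : ℕ := (p i₀ : ℕ) with hℓ
    set ε : Fin r → ℤ := fun i ↦
      (if (p i : ℕ) = ℓ then 1 else 0) - (if (q i : ℕ) = ℓ then 1 else 0) with hε
    have hεr : ∀ i, ε i = -1 ∨ ε i = 0 ∨ ε i = 1 := by
      intro i
      by_cases h1 : (p i : ℕ) = ℓ <;> by_cases h2 : (q i : ℕ) = ℓ <;> simp [hε, h1, h2]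
    have hfac : (∑ i, β i * (if (p i : ℕ) = ℓ then 1 else 0)) =
        ∑ i, β i * (if (q i : ℕ) = ℓ then 1 else 0) := by
      rw [← fact_eval β p ℓ, ← fact_eval β q ℓ, hpq']
    have hsum : (∑ i, ε i * (β i : ℤ)) = 0 := by
      have : (∑ i, ε i * (β i : ℤ)) =
          ((∑ i, β i * (if (p i : ℕ) = ℓ then 1 else 0) : ℕ) : ℤ) -
          ((∑ i, β i * (if (q i : ℕ) = ℓ then 1 else 0) : ℕ) : ℤ) := by
        push_cast
        rw [← Finset.sum_sub_distrib]
        refine Finset.sum_congr rfl fun i _ ↦ ?_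
        simp only [hε]
        ring
      rw [this, hfac, sub_self]
    have h0 := hind ε hεr hsum i₀
    have hp0 : (if (p i₀ : ℕ) = ℓ then (1:ℤ) else 0) = 1 := by simp [hℓ]
    simp only [hε, hp0] at h0
    have : (q i₀ : ℕ) = ℓ := by
      by_contra hc
      simp [hc] at h0
    exact Subtype.ext (by rw [this, hℓ])
  have hsurj : Function.Surjective Φ := by
    rintro ⟨n, p, hp, rfl⟩
    exact ⟨fun i ↦ ⟨p i, hp i⟩, rfl⟩
  -- summability of each factor
  have hexp : ∀ i : Fin r, (-((β i : ℝ) / (α : ℝ))) < -1 := by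
    intro i
    have : (1 : ℝ) < (β i : ℝ) / (α : ℝ) := by
      rw [lt_div_iff₀ (by exact_mod_cast hα)]
      have := h i
      push_cast
      linarith [(by exact_mod_cast this : (α : ℝ) < (β i : ℝ))]
    linarith
  have hsummable : ∀ i : Fin r,
      Summable fun p : {p : ℕ // p.Prime} ↦ ‖((p : ℕ) : ℝ) ^ (-((β i : ℝ) / (α : ℝ)))‖ := by
    intro i
    have := (Nat.Primes.summable_rpow.mpr (hexp i)).abs
    have h2 : Summable fun p : {p : ℕ // p.Prime} ↦ |((p : ℕ) : ℝ) ^ (-((β i : ℝ) / (α : ℝ)))| := this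
    simpa [Real.norm_eq_abs] using h2
  -- term-wise identity
  have hterm : ∀ p : Fin r → {p : ℕ // p.Prime},
      ((∏ i, (p i : ℕ) ^ β i : ℕ) : ℝ) ^ (-(1 : ℝ) / (α : ℝ)) =
        ∏ i, ((p i : ℕ) : ℝ) ^ (-((β i : ℝ) / (α : ℝ))) := by
    intro p
    have hcast : ((∏ i, (p i : ℕ) ^ β i : ℕ) : ℝ) = ∏ i, ((p i : ℕ) : ℝ) ^ (β i : ℕ) := by
      push_cast; rfl
    rw [hcast, ← Real.finset_prod_rpow _ _ (fun i _ ↦ pow_nonneg (Nat.cast_nonneg _) _)]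
    refine Finset.prod_congr rfl fun i _ ↦ ?_
    rw [← Real.rpow_natCast ((p i : ℕ) : ℝ) (β i), ← Real.rpow_mul (Nat.cast_nonneg _)]
    congr 1
    ring
  -- transport the sum along Φ
  have heq := (Equiv.ofBijective Φ ⟨hinj, hsurj⟩).tsum_eq
    (fun n : Psigma β ↦ ((n : ℕ) : ℝ) ^ (-(1 : ℝ) / (α : ℝ)))
  rw [← heq]
  have := pi_tsum_prod r (fun i (k : {p : ℕ // p.Prime}) ↦ ((k : ℕ) : ℝ) ^ (-((β i : ℝ) / (α : ℝ)))) hsummable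
  rw [← this.2]
  exact tsum_congr fun p ↦ hterm p
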